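/- Let f, g be two elements generating an ideal J in a commutative ring, and q a positive integer. Then J^{2q−1} ⊆ (f^q, g^q). More generally, if I is a prime ideal of a Noetherian ring of characteristic p such that I becomes 2-generated after localization at I, and I is the unique associated prime of I^{[q]}, then I^{2q−1} ⊆ I^{[q]}. -/

import Mathlib

/-- The `q`-th Frobenius power of an ideal: `I^{[q]}` is generated by `q`-th powers of
elements of `I`. -/
def Ideal.frobeniusPower {R : Type*} [CommRing R] (I : Ideal R) (q : ℕ) : Ideal R :=
  Ideal.span ((· ^ q) '' (I : Set R))

/-- Pigeonhole: `(I ⊔ J)^(2q-1) ≤ I^q ⊔ J^q`. -/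
lemma aux_sup_pow_le {S : Type*} [CommRing S] (I J : Ideal S) (q : ℕ) :
    (I ⊔ J) ^ (2 * q - 1) ≤ I ^ q ⊔ J ^ q := by
  rw [← Ideal.add_eq_sup, ← Ideal.add_eq_sup, add_pow, Ideal.sum_eq_sup]
  apply Finset.sup_le
  intro i hi
  simp only [Finset.mem_range] at hi
  by_cases hn : q ≤ i
  · exact Ideal.mul_le_left.trans (Ideal.mul_le_left.trans
      ((Ideal.pow_le_pow_right hn).trans le_sup_left))
  · refine Ideal.mul_le_left.trans (Ideal.mul_le_right.trans
      ((Ideal.pow_le_pow_right ?_).trans le_sup_right))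
    omega

/-- Part (a) as a standalone lemma. -/
lemma aux_pigeonhole (S : Type*) [CommRing S] (f g : S) (q : ℕ) :
    (Ideal.span {f, g} : Ideal S) ^ (2 * q - 1) ≤ Ideal.span {f ^ q, g ^ q} := by
  have h1 : (Ideal.span {f, g} : Ideal S) = Ideal.span {f} ⊔ Ideal.span {g} :=
    Ideal.span_insert f {g}
  have h2 : (Ideal.span {f ^ q, g ^ q} : Ideal S)
      = Ideal.span {f} ^ q ⊔ Ideal.span {g} ^ q := by
    rw [Ideal.span_insert, Ideal.span_singleton_pow, Ideal.span_singleton_pow]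
  rw [h1, h2]
  exact aux_sup_pow_le _ _ q

lemma aux_charP_localization (p : ℕ) (hp : p.Prime) (R : Type*) [CommRing R] [CharP R p]
    (I : Ideal R) (hI : I.IsPrime) : CharP (Localization.AtPrime I) p := by
  haveI := hI
  have h0 : (p : Localization.AtPrime I) = 0 := by
    rw [← map_natCast (algebraMap R (Localization.AtPrime I)) p, CharP.cast_eq_zero, map_zero]
  have hd : ringChar (Localization.AtPrime I) ∣ p := ringChar.dvd h0
  rcases (Nat.Prime.eq_one_or_self_of_dvd hp _ hd) with h | h
  · haveI := ringChar.eq_iff.mp h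
    have : (1 : Localization.AtPrime I) = 0 := by
      exact_mod_cast CharP.cast_eq_zero (Localization.AtPrime I) 1
    exact absurd this one_ne_zero
  · exact h ▸ ringChar.charP _

/-- (a) If `J = (f, g)` is a 2-generated ideal of a commutative ring and `q`
a positive integer, then `J^{2q−1} ⊆ (f^q, g^q)` (pigeonhole).  (b) More generally, if `I`
is a prime ideal of a Noetherian ring of characteristic `p` such that `I` becomes
2-generated after localization at `I`, and `I` is the unique associated prime of the
Frobenius power `I^{[q]}` (`q = p^e`), then `I^{2q−1} ⊆ I^{[q]}`. -/
theorem pigeonhole_power_containment (p : ℕ) (hp : p.Prime) :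
    (∀ (S : Type) [CommRing S] (f g : S) (q : ℕ), 0 < q →
      (Ideal.span {f, g} : Ideal S) ^ (2 * q - 1) ≤ Ideal.span {f ^ q, g ^ q}) ∧
    (∀ (R : Type) [CommRing R] [IsNoetherianRing R] [CharP R p]
      (I : Ideal R) (_ : I.IsPrime) (e : ℕ),
      (∃ a b : Localization.AtPrime I,
        Ideal.map (algebraMap R (Localization.AtPrime I)) I = Ideal.span {a, b}) →
      associatedPrimes R (R ⧸ I.frobeniusPower (p ^ e)) = {I} →
      I ^ (2 * p ^ e - 1) ≤ I.frobeniusPower (p ^ e)) := by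
  constructor
  · intro S _ f g q _
    exact aux_pigeonhole S f g q
  · intro R _ _ _ I hI e hgen hassoc
    obtain ⟨a, b, hab⟩ := hgen
    haveI := hI
    haveI : Fact p.Prime := ⟨hp⟩
    set q : ℕ := p ^ e with hq
    set J : Ideal R := I.frobeniusPower q with hJ
    set φ := algebraMap R (Localization.AtPrime I) with hφ
    haveI : CharP (Localization.AtPrime I) p := aux_charP_localization p hp R I hI
    have hq0 : 0 < q := pow_pos hp.pos e
    -- key: q-th powers of elements of map φ I lie in map φ J
    have key : ∀ z : Localization.AtPrime I, z ∈ Ideal.map φ I → z ^ q ∈ Ideal.map φ J := by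
      intro z hz
      have hz' : z ∈ Ideal.span (φ '' (I : Set R)) := hz
      refine Submodule.span_induction ?_ ?_ ?_ ?_ hz'
      · rintro x ⟨y, hy, rfl⟩
        have : (φ y) ^ q = φ (y ^ q) := (map_pow φ y q).symm
        rw [this]
        exact Ideal.mem_map_of_mem φ (Ideal.subset_span ⟨y, hy, rfl⟩)
      · rw [zero_pow hq0.ne']
        exact Ideal.zero_mem _
      · intro x y _ _ hx hy
        rw [hq, add_pow_char_pow]
        exact Ideal.add_mem _ hx hy
      · intro r x _ hx
        rw [smul_eq_mul, mul_pow]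
        exact Ideal.mul_mem_left _ _ hx
    intro x hx
    -- image of x lands in map φ J
    have ha : a ∈ Ideal.map φ I := by rw [hab]; exact Ideal.subset_span (by simp)
    have hb : b ∈ Ideal.map φ I := by rw [hab]; exact Ideal.subset_span (by simp)
    have h1 : φ x ∈ (Ideal.map φ I) ^ (2 * q - 1) := by
      rw [← Ideal.map_pow]; exact Ideal.mem_map_of_mem φ hx
    rw [hab] at h1
    have h2 : φ x ∈ Ideal.span {a ^ q, b ^ q} :=
      aux_pigeonhole (Localization.AtPrime I) a b q h1
    have h3 : Ideal.span {a ^ q, b ^ q} ≤ Ideal.map φ J := by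
      rw [Ideal.span_le]
      rintro z hz
      rcases hz with rfl | hz
      · exact key a ha
      · rcases hz with rfl
        exact key b hb
    have hmem : φ x ∈ Ideal.map φ J := h3 h2
    -- pull back: find t ∉ I with t * x ∈ J
    rw [hφ, IsLocalization.mem_map_algebraMap_iff I.primeCompl (Localization.AtPrime I)]
      at hmem
    obtain ⟨⟨j, s⟩, hs⟩ := hmem
    rw [← map_mul] at hs
    obtain ⟨c, hc⟩ := (IsLocalization.eq_iff_exists I.primeCompl (Localization.AtPrime I)).mp hs
    set t : R := (c : R) * (s : R) with ht
    have htI : t ∉ I := (Submonoid.mul_mem _ c.2 s.2 : (c : R) * (s : R) ∈ I.primeCompl)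
    have htx : t * x ∈ J := by
      have heq : t * x = (c : R) * ((j : R) : R) := by
        have := hc
        push_cast at this ⊢
        linear_combination this
      rw [heq]
      exact Ideal.mul_mem_left _ _ j.2
    -- conclude x ∈ J using the associated prime hypothesis
    by_contra hxJ
    have hm : (Ideal.Quotient.mk J x : R ⧸ J) ≠ 0 := by
      simpa [Ideal.Quotient.eq_zero_iff_mem] using hxJ
    obtain ⟨P, hP, hPle⟩ :=
      exists_le_isAssociatedPrime_of_isNoetherianRing R (Ideal.Quotient.mk J x) hm
    have hPI : P = I := by
      have : P ∈ associatedPrimes R (R ⧸ J) := hP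
      rw [hassoc] at this
      exact this
    have htann : t ∈ (Submodule.span R {(Ideal.Quotient.mk J x : R ⧸ J)}).annihilator := by
      rw [Submodule.mem_annihilator_span_singleton]
      have hsm : t • (Ideal.Quotient.mk J x : R ⧸ J) = Ideal.Quotient.mk J (t * x) :=
        (Submodule.Quotient.mk_smul J t x).symm
      rw [hsm, Ideal.Quotient.eq_zero_iff_mem]
      exact htx
    exact htI (hPI ▸ hPle (by
      rw [Submodule.mem_colon_singleton, Submodule.mem_bot]
      rwa [Submodule.mem_annihilator_span_singleton] at htann))
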